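/- The quotient algebra k⟨a,b⟩/(ab+ba, a²+b²+b³) is finite dimensional over k (indeed 9-dimensional as a k-vector space). -/

import Mathlib

noncomputable section

variable {k : Type*} [Field k] [CharZero k]

def Fa (k : Type*) [Field k] : FreeAlgebra k (Fin 2) := FreeAlgebra.ι k 0
def Fb (k : Type*) [Field k] : FreeAlgebra k (Fin 2) := FreeAlgebra.ι k 1

/-- Relations ab+ba = 0 and a²+b²+b³ = 0. -/
inductive Rel7 (k : Type*) [Field k] :
    FreeAlgebra k (Fin 2) → FreeAlgebra k (Fin 2) → Prop
  | anticomm : Rel7 k (Fa k * Fb k + Fb k * Fa k) 0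
  | equation : Rel7 k (Fa k ^ 2 + Fb k ^ 2 + Fb k ^ 3) 0

/-! ### Auxiliary material -/

/-- Left multiplication by `a` in the basis `1, a, b, a², ab, b², a³, a²b, a⁴`. -/
def LAZ : Matrix (Fin 9) (Fin 9) ℤ :=
  !![0,0,0,0,0,0,0,0,0;
     1,0,0,0,0,0,0,0,0;
     0,0,0,0,0,0,0,0,0;
     0,1,0,0,0,0,0,0,0;
     0,0,1,0,0,0,0,0,0;
     0,0,0,0,0,0,0,0,0;
     0,0,0,1,0,-1,0,0,0;
     0,0,0,0,1,0,0,0,0;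
     0,0,0,0,0,0,1,0,0]

/-- Left multiplication by `b` in the basis `1, a, b, a², ab, b², a³, a²b, a⁴`. -/
def LBZ : Matrix (Fin 9) (Fin 9) ℤ :=
  !![0,0,0,0,0,0,0,0,0;
     0,0,0,0,0,0,0,0,0;
     1,0,0,0,0,0,0,0,0;
     0,0,0,0,0,-1,0,0,0;
     0,-1,0,0,0,0,0,0,0;
     0,0,1,0,0,-1,0,0,0;
     0,0,0,0,1,0,0,0,0;
     0,0,0,1,0,0,0,0,0;
     0,0,0,0,0,0,0,-1,0]

def WZ : Fin 9 → Matrix (Fin 9) (Fin 9) ℤ :=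
  ![1, LAZ, LBZ, LAZ^2, LAZ*LBZ, LBZ^2, LAZ^3, LAZ^2*LBZ, LAZ^4]

lemma relZ1 : LAZ * LBZ + LBZ * LAZ = 0 := by decide
lemma relZ2 : LAZ ^ 2 + LBZ ^ 2 + LBZ ^ 3 = 0 := by decide
lemma colZ : ∀ i j : Fin 9, (WZ i) j 0 = if j = i then 1 else 0 := by decide

/-- All the rewriting identities that follow from the two relations. -/
lemma keyIdents {k : Type*} [Field k] [CharZero k] {R : Type*} [Ring R] [Module k R]
    (a b : R) (h1 : a * b + b * a = 0) (h2 : a ^ 2 + b ^ 2 + b ^ 3 = 0) :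
    a * b ^ 2 = -a ^ 3 ∧ a * (a ^ 2 * b) = 0 ∧ a * a ^ 4 = 0 ∧
    b * a = -(a * b) ∧ b * (a * b) = a ^ 3 ∧ b * a ^ 2 = a ^ 2 * b ∧
    b * b ^ 2 = -a ^ 2 - b ^ 2 ∧ b * a ^ 3 = 0 ∧ b * (a ^ 2 * b) = -a ^ 4 ∧
    b * a ^ 4 = 0 := by
  have hab : a * b = -(b * a) := eq_neg_of_add_eq_zero_left h1
  have hba : b * a = -(a * b) := eq_neg_of_add_eq_zero_right h1
  have h2' : a ^ 2 = -(b ^ 2 + b ^ 3) := by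
    rw [add_assoc] at h2; exact eq_neg_of_add_eq_zero_left h2
  have hb3 : b ^ 3 = -(a ^ 2 + b ^ 2) := eq_neg_of_add_eq_zero_right h2
  have l1 : a * b ^ 2 = b ^ 2 * a := by
    calc a * b ^ 2 = (a * b) * b := by noncomm_ring
    _ = (-(b * a)) * b := by rw [hab]
    _ = -(b * (a * b)) := by noncomm_ring
    _ = -(b * (-(b * a))) := by rw [hab]
    _ = b ^ 2 * a := by noncomm_ring
  have l2 : a * b ^ 3 = -(b ^ 3 * a) := by
    calc a * b ^ 3 = (a * b ^ 2) * b := by noncomm_ring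
    _ = (b ^ 2 * a) * b := by rw [l1]
    _ = b ^ 2 * (a * b) := by noncomm_ring
    _ = b ^ 2 * (-(b * a)) := by rw [hab]
    _ = -(b ^ 3 * a) := by noncomm_ring
  have e1 : a * a ^ 2 = -(b ^ 2 * a) + b ^ 3 * a := by
    calc a * a ^ 2 = a * (-(b ^ 2 + b ^ 3)) := by rw [h2']
    _ = -(a * b ^ 2) - a * b ^ 3 := by noncomm_ring
    _ = -(b ^ 2 * a) - -(b ^ 3 * a) := by rw [l1, l2]
    _ = -(b ^ 2 * a) + b ^ 3 * a := by noncomm_ring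
  have e2 : a * a ^ 2 = -(b ^ 2 * a) - b ^ 3 * a := by
    calc a * a ^ 2 = a ^ 2 * a := by noncomm_ring
    _ = (-(b ^ 2 + b ^ 3)) * a := by rw [h2']
    _ = -(b ^ 2 * a) - b ^ 3 * a := by noncomm_ring
  have e3 : b ^ 3 * a + b ^ 3 * a = 0 := by
    have h5 := e1.symm.trans e2
    rw [sub_eq_add_neg] at h5
    have h6 : b ^ 3 * a = -(b ^ 3 * a) := add_left_cancel h5
    nth_rewrite 1 [h6]
    rw [neg_add_cancel]
  have l3 : b ^ 3 * a = 0 := by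
    have h4 : (2 : k) • (b ^ 3 * a) = 0 := by rw [two_smul]; exact e3
    have h5 : ((2 : k))⁻¹ • ((2 : k) • (b ^ 3 * a)) = b ^ 3 * a := by
      rw [smul_smul, inv_mul_cancel₀ (by norm_num : (2 : k) ≠ 0), one_smul]
    rw [← h5, h4, smul_zero]
  have l5 : a ^ 3 = -(b ^ 2 * a) := by
    calc a ^ 3 = a * a ^ 2 := by noncomm_ring
    _ = -(b ^ 2 * a) + b ^ 3 * a := e1
    _ = -(b ^ 2 * a) := by rw [l3, add_zero]
  have P1 : a * b ^ 2 = -a ^ 3 := by rw [l1, l5, neg_neg]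
  have l7 : a ^ 2 * b = -b ^ 3 - b ^ 4 := by
    calc a ^ 2 * b = (-(b ^ 2 + b ^ 3)) * b := by rw [h2']
    _ = -b ^ 3 - b ^ 4 := by noncomm_ring
  have P2 : a * (a ^ 2 * b) = 0 := by
    calc a * (a ^ 2 * b) = a ^ 2 * (a * b) := by noncomm_ring
    _ = a ^ 2 * (-(b * a)) := by rw [hab]
    _ = -((a ^ 2 * b) * a) := by noncomm_ring
    _ = -((-b ^ 3 - b ^ 4) * a) := by rw [l7]
    _ = b ^ 3 * a + b * (b ^ 3 * a) := by noncomm_ring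
    _ = 0 := by rw [l3, mul_zero, add_zero]
  have P3 : a * a ^ 4 = 0 := by
    calc a * a ^ 4 = a ^ 2 * a ^ 3 := by noncomm_ring
    _ = (-(b ^ 2 + b ^ 3)) * (-(b ^ 2 * a)) := by rw [h2', l5]
    _ = b * (b ^ 3 * a) + b ^ 2 * (b ^ 3 * a) := by noncomm_ring
    _ = 0 := by rw [l3, mul_zero, mul_zero, add_zero]
  have P5 : b * (a * b) = a ^ 3 := by
    calc b * (a * b) = b * (-(b * a)) := by rw [hab]
    _ = -(b ^ 2 * a) := by noncomm_ring
    _ = a ^ 3 := l5.symm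
  have P6 : b * a ^ 2 = a ^ 2 * b := by
    calc b * a ^ 2 = (b * a) * a := by noncomm_ring
    _ = (-(a * b)) * a := by rw [hba]
    _ = -(a * (b * a)) := by noncomm_ring
    _ = -(a * (-(a * b))) := by rw [hba]
    _ = a ^ 2 * b := by noncomm_ring
  have P7 : b * b ^ 2 = -a ^ 2 - b ^ 2 := by
    calc b * b ^ 2 = b ^ 3 := by noncomm_ring
    _ = -(a ^ 2 + b ^ 2) := hb3
    _ = -a ^ 2 - b ^ 2 := by noncomm_ring
  have P8 : b * a ^ 3 = 0 := by
    calc b * a ^ 3 = b * (-(b ^ 2 * a)) := by rw [l5]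
    _ = -(b ^ 3 * a) := by noncomm_ring
    _ = 0 := by rw [l3, neg_zero]
  have ha4 : a ^ 4 = b ^ 4 + b ^ 5 := by
    calc a ^ 4 = a * a ^ 3 := by noncomm_ring
    _ = a * (-(b ^ 2 * a)) := by rw [l5]
    _ = -((a * b ^ 2) * a) := by noncomm_ring
    _ = -((b ^ 2 * a) * a) := by rw [l1]
    _ = -(b ^ 2 * a ^ 2) := by noncomm_ring
    _ = -(b ^ 2 * (-(b ^ 2 + b ^ 3))) := by rw [h2']
    _ = b ^ 4 + b ^ 5 := by noncomm_ring
  have P9 : b * (a ^ 2 * b) = -a ^ 4 := by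
    calc b * (a ^ 2 * b) = (b * a ^ 2) * b := by noncomm_ring
    _ = (a ^ 2 * b) * b := by rw [P6]
    _ = a ^ 2 * b ^ 2 := by noncomm_ring
    _ = (-(b ^ 2 + b ^ 3)) * b ^ 2 := by rw [h2']
    _ = -(b ^ 4 + b ^ 5) := by noncomm_ring
    _ = -a ^ 4 := by rw [ha4]
  have P10 : b * a ^ 4 = 0 := by
    calc b * a ^ 4 = (b * a ^ 3) * a := by noncomm_ring
    _ = 0 := by rw [P8, zero_mul]
  exact ⟨P1, P2, P3, hba, P5, P6, P7, P8, P9, P10⟩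

def Qa (k : Type*) [Field k] : RingQuot (Rel7 k) := RingQuot.mkAlgHom k (Rel7 k) (Fa k)
def Qb (k : Type*) [Field k] : RingQuot (Rel7 k) := RingQuot.mkAlgHom k (Rel7 k) (Fb k)

def vQ (k : Type*) [Field k] : Fin 9 → RingQuot (Rel7 k) :=
  ![1, Qa k, Qb k, (Qa k) ^ 2, Qa k * Qb k, (Qb k) ^ 2, (Qa k) ^ 3,
    (Qa k) ^ 2 * Qb k, (Qa k) ^ 4]

lemma relQ1 : Qa k * Qb k + Qb k * Qa k = 0 := by
  have h := RingQuot.mkAlgHom_rel k (Rel7.anticomm (k := k))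
  simpa [Qa, Qb, map_add, map_mul] using h

lemma relQ2 : (Qa k) ^ 2 + (Qb k) ^ 2 + (Qb k) ^ 3 = 0 := by
  have h := RingQuot.mkAlgHom_rel k (Rel7.equation (k := k))
  simpa [Qa, Qb, map_add, map_pow] using h

def LAk (k : Type*) [Field k] : Matrix (Fin 9) (Fin 9) k :=
  (Int.castRingHom k).mapMatrix LAZ
def LBk (k : Type*) [Field k] : Matrix (Fin 9) (Fin 9) k :=
  (Int.castRingHom k).mapMatrix LBZ

lemma relK1 : LAk k * LBk k + LBk k * LAk k = 0 := by
  have h := congrArg (Int.castRingHom k).mapMatrix relZ1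
  simpa [LAk, LBk, map_add, map_mul] using h

lemma relK2 : (LAk k) ^ 2 + (LBk k) ^ 2 + (LBk k) ^ 3 = 0 := by
  have h := congrArg (Int.castRingHom k).mapMatrix relZ2
  simpa [LAk, LBk, map_add, map_pow] using h

def φalg (k : Type*) [Field k] : FreeAlgebra k (Fin 2) →ₐ[k] Matrix (Fin 9) (Fin 9) k :=
  FreeAlgebra.lift k ![LAk k, LBk k]

lemma φrel : ∀ ⦃x y⦄, Rel7 k x y → φalg k x = φalg k y := by
  intro x y h
  cases h with
  | anticomm =>
    simpa [φalg, Fa, Fb] using relK1 (k := k)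
  | equation =>
    simpa [φalg, Fa, Fb] using relK2 (k := k)

def Φ (k : Type*) [Field k] [CharZero k] : RingQuot (Rel7 k) →ₐ[k] Matrix (Fin 9) (Fin 9) k :=
  RingQuot.liftAlgHom k ⟨φalg k, φrel⟩

lemma ΦQa : Φ k (Qa k) = LAk k := by
  rw [Qa, Φ, RingQuot.liftAlgHom_mkAlgHom_apply]
  simp [φalg, Fa]

lemma ΦQb : Φ k (Qb k) = LBk k := by
  rw [Qb, Φ, RingQuot.liftAlgHom_mkAlgHom_apply]
  simp [φalg, Fb]

lemma Φv (i : Fin 9) : Φ k (vQ k i) = (Int.castRingHom k).mapMatrix (WZ i) := by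
  fin_cases i
  · show Φ k 1 = (Int.castRingHom k).mapMatrix 1
    rw [map_one, map_one]
  · show Φ k (Qa k) = (Int.castRingHom k).mapMatrix LAZ
    rw [ΦQa]; rfl
  · show Φ k (Qb k) = (Int.castRingHom k).mapMatrix LBZ
    rw [ΦQb]; rfl
  · show Φ k ((Qa k) ^ 2) = (Int.castRingHom k).mapMatrix (LAZ ^ 2)
    rw [map_pow, map_pow, ΦQa]; rfl
  · show Φ k (Qa k * Qb k) = (Int.castRingHom k).mapMatrix (LAZ * LBZ)
    rw [map_mul, map_mul, ΦQa, ΦQb]; rfl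
  · show Φ k ((Qb k) ^ 2) = (Int.castRingHom k).mapMatrix (LBZ ^ 2)
    rw [map_pow, map_pow, ΦQb]; rfl
  · show Φ k ((Qa k) ^ 3) = (Int.castRingHom k).mapMatrix (LAZ ^ 3)
    rw [map_pow, map_pow, ΦQa]; rfl
  · show Φ k ((Qa k) ^ 2 * Qb k) = (Int.castRingHom k).mapMatrix (LAZ ^ 2 * LBZ)
    rw [map_mul, map_mul, map_pow, map_pow, ΦQa, ΦQb]; rfl
  · show Φ k ((Qa k) ^ 4) = (Int.castRingHom k).mapMatrix (LAZ ^ 4)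
    rw [map_pow, map_pow, ΦQa]; rfl

/-- The "first column" linear map. -/
def col0 (k : Type*) [Field k] : Matrix (Fin 9) (Fin 9) k →ₗ[k] (Fin 9 → k) where
  toFun M := fun j => M j 0
  map_add' := fun _ _ => rfl
  map_smul' := fun _ _ => rfl

theorem finite_dimensional_quotient :
    FiniteDimensional k (RingQuot (Rel7 k)) ∧
    Module.finrank k (RingQuot (Rel7 k)) = 9 := by
  obtain ⟨P1, P2, P3, P4, P5, P6, P7, P8, P9, P10⟩ :=
    keyIdents (k := k) (Qa k) (Qb k) relQ1 relQ2
  -- linear independence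
  have li : LinearIndependent k (vQ k) := by
    apply LinearIndependent.of_comp ((col0 k).comp (Φ k).toLinearMap)
    have he : ((col0 k).comp (Φ k).toLinearMap) ∘ vQ k
        = fun (i : Fin 9) => Pi.single i (1 : k) := by
      funext i j
      simp only [Function.comp_apply, LinearMap.comp_apply, AlgHom.toLinearMap_apply,
        Φv, col0, LinearMap.coe_mk, AddHom.coe_mk, RingHom.mapMatrix_apply,
        Matrix.map_apply]
      change ((WZ i).map ⇑(Int.castRingHom k)) j 0 = _
      rw [Matrix.map_apply, colZ i j]
      simp [Pi.single_apply]
    rw [he]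
    have h9 : (fun i => Pi.single i (1 : k)) = ⇑(Pi.basisFun k (Fin 9)) := by
      funext i; simp [Pi.basisFun_apply]
    rw [h9]
    exact (Pi.basisFun k (Fin 9)).linearIndependent
  -- spanning
  set p : Submodule k (RingQuot (Rel7 k)) := Submodule.span k (Set.range (vQ k)) with hp
  have hv : ∀ i, vQ k i ∈ p := fun i => Submodule.subset_span ⟨i, rfl⟩
  have h1m : (1 : RingQuot (Rel7 k)) ∈ p := hv 0
  have hA : Qa k ∈ p := hv 1
  have hB : Qb k ∈ p := hv 2
  have hA2 : (Qa k) ^ 2 ∈ p := hv 3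
  have hAB : Qa k * Qb k ∈ p := hv 4
  have hB2 : (Qb k) ^ 2 ∈ p := hv 5
  have hA3 : (Qa k) ^ 3 ∈ p := hv 6
  have hA2B : (Qa k) ^ 2 * Qb k ∈ p := hv 7
  have hA4 : (Qa k) ^ 4 ∈ p := hv 8
  have stepA : ∀ x ∈ p, Qa k * x ∈ p := by
    intro x hx
    have hle : p ≤ Submodule.comap (LinearMap.mulLeft k (Qa k)) p := by
      rw [hp, Submodule.span_le]
      rintro _ ⟨i, rfl⟩
      simp only [SetLike.mem_coe, Submodule.mem_comap, LinearMap.mulLeft_apply]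
      fin_cases i
      · show Qa k * 1 ∈ p; rw [mul_one]; exact hA
      · show Qa k * Qa k ∈ p
        rw [(by noncomm_ring : Qa k * Qa k = (Qa k) ^ 2)]; exact hA2
      · show Qa k * Qb k ∈ p; exact hAB
      · show Qa k * (Qa k) ^ 2 ∈ p
        rw [(by noncomm_ring : Qa k * (Qa k) ^ 2 = (Qa k) ^ 3)]; exact hA3
      · show Qa k * (Qa k * Qb k) ∈ p
        rw [(by noncomm_ring : Qa k * (Qa k * Qb k) = (Qa k) ^ 2 * Qb k)]; exact hA2B
      · show Qa k * (Qb k) ^ 2 ∈ p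
        rw [P1]; exact p.neg_mem hA3
      · show Qa k * (Qa k) ^ 3 ∈ p
        rw [(by noncomm_ring : Qa k * (Qa k) ^ 3 = (Qa k) ^ 4)]; exact hA4
      · show Qa k * ((Qa k) ^ 2 * Qb k) ∈ p
        rw [P2]; exact p.zero_mem
      · show Qa k * (Qa k) ^ 4 ∈ p
        rw [P3]; exact p.zero_mem
    exact hle hx
  have stepB : ∀ x ∈ p, Qb k * x ∈ p := by
    intro x hx
    have hle : p ≤ Submodule.comap (LinearMap.mulLeft k (Qb k)) p := by
      rw [hp, Submodule.span_le]
      rintro _ ⟨i, rfl⟩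
      simp only [SetLike.mem_coe, Submodule.mem_comap, LinearMap.mulLeft_apply]
      fin_cases i
      · show Qb k * 1 ∈ p; rw [mul_one]; exact hB
      · show Qb k * Qa k ∈ p; rw [P4]; exact p.neg_mem hAB
      · show Qb k * Qb k ∈ p
        rw [(by noncomm_ring : Qb k * Qb k = (Qb k) ^ 2)]; exact hB2
      · show Qb k * (Qa k) ^ 2 ∈ p; rw [P6]; exact hA2B
      · show Qb k * (Qa k * Qb k) ∈ p; rw [P5]; exact hA3
      · show Qb k * (Qb k) ^ 2 ∈ p
        rw [P7]; exact p.sub_mem (p.neg_mem hA2) hB2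
      · show Qb k * (Qa k) ^ 3 ∈ p; rw [P8]; exact p.zero_mem
      · show Qb k * ((Qa k) ^ 2 * Qb k) ∈ p; rw [P9]; exact p.neg_mem hA4
      · show Qb k * (Qa k) ^ 4 ∈ p; rw [P10]; exact p.zero_mem
    exact hle hx
  have main : ∀ y : FreeAlgebra k (Fin 2), ∀ x ∈ p,
      RingQuot.mkAlgHom k (Rel7 k) y * x ∈ p := by
    intro y
    induction y using FreeAlgebra.induction with
    | grade0 r =>
      intro x hx
      rw [AlgHom.commutes, Algebra.algebraMap_eq_smul_one, smul_mul_assoc, one_mul]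
      exact p.smul_mem r hx
    | grade1 i =>
      fin_cases i
      · exact stepA
      · exact stepB
    | mul y z hy hz =>
      intro x hx
      rw [map_mul, mul_assoc]
      exact hy _ (hz _ hx)
    | add y z hy hz =>
      intro x hx
      rw [map_add, add_mul]
      exact p.add_mem (hy _ hx) (hz _ hx)
  have hsp : ⊤ ≤ Submodule.span k (Set.range (vQ k)) := by
    intro x _
    obtain ⟨y, rfl⟩ := RingQuot.mkAlgHom_surjective k (Rel7 k) x
    have := main y 1 h1m
    rwa [mul_one] at this
  let bQ : Module.Basis (Fin 9) k (RingQuot (Rel7 k)) := Module.Basis.mk li hsp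
  refine ⟨Module.Finite.of_basis bQ, ?_⟩
  rw [Module.finrank_eq_card_basis bQ, Fintype.card_fin]

end
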